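/- Let m ≥ 2 and n ≥ 1 be integers and define N : ℝ → ℝ by N(x) = x((m−1)x^{m+n} + (n+1))/(m·x^{m+n} + n). Then for every real x > 0, the iterates N^{∘k}(x) converge to 1 as k → ∞. -/

import Mathlib

open Filter Topology

private lemma aux_geom (t : ℕ) (x : ℝ) :
    (1 - x) * ∑ i ∈ Finset.range t, x ^ i = 1 - x ^ t := by
  have h := geom_sum_mul x t
  linear_combination -h

private lemma aux_L1 (n : ℕ) (x : ℝ) :
    (1 - x) * ∑ i ∈ Finset.range n, ((n : ℝ) - i) * x ^ i
      = (n : ℝ) - x * ∑ i ∈ Finset.range n, x ^ i := by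
  induction n with
  | zero => simp
  | succ n ih =>
    have hg := aux_geom (n + 1) x
    have hsplit : ∑ i ∈ Finset.range (n+1), (((n+1 : ℕ) : ℝ) - i) * x ^ i
        = (∑ i ∈ Finset.range n, ((n : ℝ) - i) * x ^ i)
          + ∑ i ∈ Finset.range (n+1), x ^ i := by
      have h1 : ∀ i ∈ Finset.range (n+1), (((n+1 : ℕ) : ℝ) - i) * x ^ i
          = ((n : ℝ) - i) * x ^ i + x ^ i := by
        intro i _
        push_cast
        ring
      rw [Finset.sum_congr rfl h1, Finset.sum_add_distrib, Finset.sum_range_succ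
        (f := fun i => ((n : ℝ) - i) * x ^ i)]
      simp
    rw [hsplit, mul_add, ih, hg, Finset.sum_range_succ (f := fun i => x ^ i)]
    push_cast
    ring

private lemma aux_L2 (t : ℕ) (x : ℝ) :
    (1 - x) * ∑ i ∈ Finset.range t, ((i : ℝ) + 1) * x ^ (i+1)
      = x * (∑ i ∈ Finset.range t, x ^ i) - (t : ℝ) * x ^ (t+1) := by
  induction t with
  | zero => simp
  | succ t ih =>
    rw [Finset.sum_range_succ, Finset.sum_range_succ (f := fun i => x ^ i), mul_add, ih]
    push_cast
    ring

private noncomputable def Bpoly (k n : ℕ) (x : ℝ) : ℝ :=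
  (∑ i ∈ Finset.range n, ((n : ℝ) - i) * x ^ i)
    - x ^ n * ∑ i ∈ Finset.range k, ((i : ℝ) + 1) * x ^ (i+1)

private lemma aux_P (k n : ℕ) (x : ℝ) :
    x * ((k : ℝ) * x ^ (k+1+n) + ((n : ℝ) + 1)) - (((k : ℝ) + 1) * x ^ (k+1+n) + n)
      = -((1 - x)^2 * Bpoly k n x) := by
  have h1 := aux_L1 n x
  have h2 := aux_L2 k x
  have hgn := aux_geom n x
  have hgk := aux_geom k x
  unfold Bpoly
  linear_combination (1 - x) * h1 - x * hgn - (1 - x) * x ^ n * h2 - x ^ (n+1) * hgk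

private lemma aux_Bneg (k n : ℕ) (hn : 1 ≤ n) {a b : ℝ} (ha : 0 < a) (hab : a < b)
    (hBa : Bpoly k n a ≤ 0) : Bpoly k n b < 0 := by
  have hb : 0 < b := ha.trans hab
  have hS1 : (∑ i ∈ Finset.range n, ((n : ℝ) - i) * b ^ i) * a ^ n
      < (∑ i ∈ Finset.range n, ((n : ℝ) - i) * a ^ i) * b ^ n := by
    rw [Finset.sum_mul, Finset.sum_mul]
    refine Finset.sum_lt_sum_of_nonempty ⟨0, Finset.mem_range.mpr (by omega)⟩ ?_
    intro i hi
    have hin : i < n := Finset.mem_range.mp hi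
    have hcoef : (0:ℝ) < (n : ℝ) - i := by
      have : (i:ℝ) < n := by exact_mod_cast hin
      linarith
    have hpow : b ^ i * a ^ n < a ^ i * b ^ n := by
      have e1 : a ^ n = a ^ i * a ^ (n - i) := by
        rw [← pow_add]; congr 1; omega
      have e2 : b ^ n = b ^ i * b ^ (n - i) := by
        rw [← pow_add]; congr 1; omega
      have h3 : a ^ (n - i) < b ^ (n - i) :=
        pow_lt_pow_left₀ hab ha.le (by omega)
      have h4 := mul_lt_mul_of_pos_left h3 (mul_pos (pow_pos ha i) (pow_pos hb i))
      rw [e1, e2]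
      linarith [h4]
    have h5 := mul_lt_mul_of_pos_left hpow hcoef
    convert h5 using 1 <;> ring
  have hS2 : (∑ i ∈ Finset.range k, ((i : ℝ) + 1) * a ^ (i+1))
      ≤ ∑ i ∈ Finset.range k, ((i : ℝ) + 1) * b ^ (i+1) := by
    refine Finset.sum_le_sum ?_
    intro i _
    have : a ^ (i+1) ≤ b ^ (i+1) := pow_le_pow_left₀ ha.le hab.le (i+1)
    have hc : (0:ℝ) ≤ (i:ℝ) + 1 := by positivity
    nlinarith
  have key : Bpoly k n b * a ^ n < Bpoly k n a * b ^ n := by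
    unfold Bpoly
    have h6 : a ^ n * b ^ n * (∑ i ∈ Finset.range k, ((i : ℝ) + 1) * a ^ (i+1))
        ≤ a ^ n * b ^ n * ∑ i ∈ Finset.range k, ((i : ℝ) + 1) * b ^ (i+1) :=
      mul_le_mul_of_nonneg_left hS2 (by positivity)
    nlinarith [hS1, h6]
  by_contra hB
  push_neg at hB
  have h7 : 0 ≤ Bpoly k n b * a ^ n := mul_nonneg hB (pow_pos ha n).le
  have h8 : Bpoly k n a * b ^ n ≤ 0 :=
    mul_nonpos_iff.mpr (Or.inr ⟨hBa, (pow_pos hb n).le⟩)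
  linarith

/-- For `m ≥ 2`, the positive real axis is contained in the immediate basin of the
superattracting fixed point `1` of the Newton map
`N(x) = x((m-1)x^(m+n) + (n+1))/(m x^(m+n) + n)` of the McMullen map `z^m - 1/z^n`:
the iterates of every `x > 0` converge to `1`. -/
theorem newton_mcmullen_positive_axis_basin
    (m n : ℕ) (hm : 2 ≤ m) (hn : 1 ≤ n)
    (N : ℝ → ℝ)
    (hN : ∀ x, N x = x * ((m - 1 : ℝ) * x ^ (m + n) + (n + 1 : ℝ)) /
      ((m : ℝ) * x ^ (m + n) + (n : ℝ)))
    (x : ℝ) (hx : 0 < x) :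
    Tendsto (fun k => N^[k] x) atTop (𝓝 1) := by
  obtain ⟨k, rfl⟩ : ∃ k, m = k + 1 := ⟨m - 1, by omega⟩
  have hn0 : (0:ℝ) < n := by exact_mod_cast hn
  have hD : ∀ y : ℝ, 0 ≤ y → (0:ℝ) < ((k:ℝ) + 1) * y ^ (k+1+n) + n := by
    intro y hy
    have h1 : (0:ℝ) ≤ ((k:ℝ) + 1) * y ^ (k+1+n) := by positivity
    linarith
  have hNval : ∀ y : ℝ, N y = y * ((k:ℝ) * y ^ (k+1+n) + ((n:ℝ) + 1)) /
      (((k:ℝ) + 1) * y ^ (k+1+n) + n) := by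
    intro y
    rw [hN y]
    push_cast
    ring_nf
  have hstep : ∀ y : ℝ, 0 < y →
      N y - y = y * (1 - y ^ (k+1+n)) / (((k:ℝ) + 1) * y ^ (k+1+n) + n) := by
    intro y hy
    have hd := (hD y hy.le).ne'
    rw [hNval y]
    field_simp
    ring
  have hsign : ∀ y : ℝ, 0 < y →
      N y - 1 = -((1 - y)^2 * Bpoly k n y) / (((k:ℝ) + 1) * y ^ (k+1+n) + n) := by
    intro y hy
    have hd := (hD y hy.le).ne'
    have hnum : y * ((k:ℝ) * y ^ (k+1+n) + ((n:ℝ) + 1)) - (((k:ℝ) + 1) * y ^ (k+1+n) + n)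
        = -((1 - y)^2 * Bpoly k n y) := aux_P k n y
    rw [hNval y, div_sub_one hd, hnum]
  have hNpos : ∀ y : ℝ, 0 < y → 0 < N y := by
    intro y hy
    rw [hNval y]
    apply div_pos
    · have h1 : (0:ℝ) ≤ (k:ℝ) * y ^ (k+1+n) := by positivity
      nlinarith
    · exact hD y hy.le
  have hone : N 1 = 1 := by
    have h := hsign 1 one_pos
    norm_num at h
    linarith
  have hfix : ∀ L : ℝ, 0 < L → N L = L → L = 1 := by
    intro L hL hNL
    have h := hstep L hL
    rw [hNL, sub_self] at h
    have hd := (hD L hL.le).ne'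
    have h3 : L ^ (k+1+n) = 1 := by
      have h' : L * (1 - L ^ (k+1+n)) = 0 := by
        rw [eq_comm, div_eq_zero_iff] at h
        rcases h with h | h
        · exact h
        · exact absurd h hd
      rcases mul_eq_zero.mp h' with h | h
      · exact absurd h hL.ne'
      · linarith
    by_contra hne
    rcases lt_or_gt_of_ne hne with hlt | hgt
    · have := pow_lt_one₀ hL.le hlt (by omega : k+1+n ≠ 0)
      rw [h3] at this; exact lt_irrefl 1 this
    · have := one_lt_pow₀ hgt (by omega : k+1+n ≠ 0)
      rw [h3] at this; exact lt_irrefl 1 this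
  have hup : ∀ y : ℝ, 1 < y → N y < y := by
    intro y hy
    have hy0 : (0:ℝ) < y := lt_trans one_pos hy
    have h := hstep y hy0
    have hD' := hD y hy0.le
    have hyp : 1 < y ^ (k+1+n) := one_lt_pow₀ hy (by omega)
    have hneg : y * (1 - y ^ (k+1+n)) / (((k:ℝ) + 1) * y ^ (k+1+n) + n) < 0 :=
      div_neg_of_neg_of_pos (by nlinarith) hD'
    linarith
  have hdn : ∀ y : ℝ, 0 < y → y < 1 → y < N y := by
    intro y hy0 hy
    have h := hstep y hy0
    have hD' := hD y hy0.le
    have hyp : y ^ (k+1+n) < 1 := pow_lt_one₀ hy0.le hy (by omega)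
    have hpos : 0 < y * (1 - y ^ (k+1+n)) / (((k:ℝ) + 1) * y ^ (k+1+n) + n) :=
      div_pos (by nlinarith) hD'
    linarith
  have hcont : ∀ L : ℝ, 0 < L → ContinuousAt N L := by
    intro L hL
    have hfun : N = fun y => y * ((k:ℝ) * y ^ (k+1+n) + ((n:ℝ) + 1)) /
        (((k:ℝ) + 1) * y ^ (k+1+n) + n) := funext hNval
    rw [hfun]
    apply ContinuousAt.div
    · fun_prop
    · fun_prop
    · exact (hD L hL.le).ne'
  have fixlim : ∀ (t : ℕ → ℝ) (L : ℝ), (∀ j, t (j+1) = N (t j)) → 0 < L →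
      Tendsto t atTop (𝓝 L) → Tendsto t atTop (𝓝 1) := by
    intro t L htN hL ht
    have h1 : Tendsto (fun j => t (j+1)) atTop (𝓝 L) :=
      ht.comp (tendsto_add_atTop_nat 1)
    have h2 : Tendsto (fun j => N (t j)) atTop (𝓝 (N L)) :=
      (hcont L hL).tendsto.comp ht
    have h2' : Tendsto (fun j => t (j+1)) atTop (𝓝 (N L)) := by
      simp only [htN]; exact h2
    have h3 : N L = L := tendsto_nhds_unique h2' h1
    have h4 : L = 1 := hfix L hL h3
    rwa [h4] at ht
  set o : ℕ → ℝ := fun j => N^[j] x with ho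
  have hoS : ∀ j, o (j+1) = N (o j) := by
    intro j
    simp only [ho, Function.iterate_succ_apply']
  have hopos : ∀ j, 0 < o j := by
    intro j
    induction j with
    | zero => simpa [ho] using hx
    | succ j ih => rw [hoS j]; exact hNpos _ ih
  have tail : ∀ (j0 : ℕ), Tendsto (fun i => o (i + j0)) atTop (𝓝 1) →
      Tendsto o atTop (𝓝 1) := by
    intro j0 h
    exact (tendsto_add_atTop_iff_nat j0).mp h
  have convMono : ∀ (t : ℕ → ℝ), (∀ i, t (i+1) = N (t i)) → Monotone t →
      (∀ i, t i ≤ 1) → 0 < t 0 → Tendsto t atTop (𝓝 1) := by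
    intro t htN hmono hub h0
    have hbdd : BddAbove (Set.range t) := ⟨1, by rintro _ ⟨i, rfl⟩; exact hub i⟩
    have hT := tendsto_atTop_ciSup hmono hbdd
    have hLpos : 0 < ⨆ i, t i := lt_of_lt_of_le h0 (le_ciSup hbdd 0)
    exact fixlim t _ htN hLpos hT
  have convAnti : ∀ (t : ℕ → ℝ), (∀ i, t (i+1) = N (t i)) → Antitone t →
      (∀ i, 1 ≤ t i) → Tendsto t atTop (𝓝 1) := by
    intro t htN hanti hlb
    have hbdd : BddBelow (Set.range t) := ⟨1, by rintro _ ⟨i, rfl⟩; exact hlb i⟩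
    have hT := tendsto_atTop_ciInf hanti hbdd
    have hLpos : (0:ℝ) < ⨅ i, t i := lt_of_lt_of_le one_pos (le_ciInf hlb)
    exact fixlim t _ htN hLpos hT
  have dich : (∀ y : ℝ, 1 ≤ y → 1 ≤ N y) ∨ (∀ y : ℝ, 0 < y → y ≤ 1 → N y ≤ 1) := by
    by_cases hc : ∀ y : ℝ, 0 < y → y ≤ 1 → N y ≤ 1
    · exact Or.inr hc
    · left
      push_neg at hc
      obtain ⟨a, ha0, ha1, haN⟩ := hc
      have hsa := hsign a ha0
      have hDa := hD a ha0.le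
      have hBa : Bpoly k n a < 0 := by
        by_contra hB
        push_neg at hB
        have hnum : -((1 - a)^2 * Bpoly k n a) ≤ 0 := by nlinarith [sq_nonneg (1 - a)]
        have : -((1 - a)^2 * Bpoly k n a) / (((k:ℝ) + 1) * a ^ (k+1+n) + n) ≤ 0 :=
          div_nonpos_of_nonpos_of_nonneg hnum hDa.le
        linarith
      have haa : a < 1 := by
        rcases lt_or_eq_of_le ha1 with h | h
        · exact h
        · exfalso; rw [h, hone] at haN; exact lt_irrefl 1 haN
      intro y hy
      have hBy : Bpoly k n y < 0 := aux_Bneg k n hn ha0 (lt_of_lt_of_le haa hy) hBa.le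
      have hy0 : (0:ℝ) < y := lt_of_lt_of_le one_pos hy
      have hsy := hsign y hy0
      have hDy := hD y hy0.le
      have hnum : 0 ≤ -((1 - y)^2 * Bpoly k n y) := by nlinarith [sq_nonneg (1 - y)]
      have : 0 ≤ -((1 - y)^2 * Bpoly k n y) / (((k:ℝ) + 1) * y ^ (k+1+n) + n) :=
        div_nonneg hnum hDy.le
      linarith
  rcases dich with Hup | Hdown
  · by_cases hEx : ∃ j, 1 ≤ o j
    · obtain ⟨j0, hj0⟩ := hEx
      apply tail j0
      set t : ℕ → ℝ := fun i => o (i + j0) with htdef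
      have htN : ∀ i, t (i+1) = N (t i) := by
        intro i
        simp only [htdef]
        rw [show i + 1 + j0 = (i + j0) + 1 by omega, hoS]
      have hge : ∀ i, 1 ≤ t i := by
        intro i
        induction i with
        | zero => simpa [htdef] using hj0
        | succ i ih => rw [htN i]; exact Hup _ ih
      have hanti : Antitone t := by
        apply antitone_nat_of_succ_le
        intro i
        rcases eq_or_lt_of_le (hge i) with h | h
        · rw [htN i, ← h, hone]
        · rw [htN i]; exact (hup _ h).le
      exact convAnti t htN hanti hge
    · push_neg at hEx
      have hmono : Monotone o := monotone_nat_of_le_succ (fun j => by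
        rw [hoS j]; exact (hdn _ (hopos j) (hEx j)).le)
      exact convMono o hoS hmono (fun j => (hEx j).le) (hopos 0)
  · by_cases hEx : ∃ j, o j ≤ 1
    · obtain ⟨j0, hj0⟩ := hEx
      apply tail j0
      set t : ℕ → ℝ := fun i => o (i + j0) with htdef
      have htN : ∀ i, t (i+1) = N (t i) := by
        intro i
        simp only [htdef]
        rw [show i + 1 + j0 = (i + j0) + 1 by omega, hoS]
      have tpos : ∀ i, 0 < t i := fun i => hopos (i + j0)
      have hle : ∀ i, t i ≤ 1 := by
        intro i
        induction i with
        | zero => simpa [htdef] using hj0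
        | succ i ih => rw [htN i]; exact Hdown _ (tpos i) ih
      have hmono : Monotone t := by
        apply monotone_nat_of_le_succ
        intro i
        rcases lt_or_eq_of_le (hle i) with h | h
        · rw [htN i]; exact (hdn _ (tpos i) h).le
        · rw [htN i, h, hone]
      exact convMono t htN hmono hle (tpos 0)
    · push_neg at hEx
      have hanti : Antitone o := antitone_nat_of_succ_le (fun j => by
        rw [hoS j]; exact (hup _ (hEx j)).le)
      exact convAnti o hoS hanti (fun j => (hEx j).le)
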